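/- arXiv:1303.0327 — 2 statements merged into one kernel-verified Lean document; each statement's English description precedes it below -/
import Mathlib

section
/- Let f : [0,∞) → X be a function into a Banach space that is Pettis integrable on [0,∞). Then for every ε > 0 there exists N > 0 such that for every compact set K ⊆ [N,∞), the norm of the Pettis integral of f over K is less than ε. -/
open MeasureTheory
open Filter Topology

set_option linter.unusedVariables false
set_option linter.unnecessarySimpa false


lemma exists_limit_functional {X : Type*} [NormedAddCommGroup X] [NormedSpace ℝ X]
    (φ : ℕ → X →L[ℝ] ℝ) (hφ : ∀ k, ‖φ k‖ ≤ 1) :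
    ∃ Φ : X →L[ℝ] ℝ, ‖Φ‖ ≤ 1 ∧ ∀ z l, Tendsto (fun k => φ k z) atTop (𝓝 l) → Φ z = l := by
  have hbdd : ∀ z : X, ∀ k, φ k z ∈ Set.Icc (-‖z‖) ‖z‖ := by
    intro z k
    have h1 : |φ k z| ≤ ‖z‖ := by
      calc |φ k z| = ‖φ k z‖ := rfl
        _ ≤ ‖φ k‖ * ‖z‖ := (φ k).le_opNorm z
        _ ≤ 1 * ‖z‖ := mul_le_mul_of_nonneg_right (hφ k) (norm_nonneg z)
        _ = ‖z‖ := one_mul _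
    exact abs_le.1 h1
  set U : Ultrafilter ℕ := Ultrafilter.of atTop with hUdef
  have hU : (U : Filter ℕ) ≤ atTop := Ultrafilter.of_le atTop
  have key : ∀ z : X, ∃ l : ℝ, Tendsto (fun k => φ k z) U (𝓝 l) := by
    intro z
    obtain ⟨l, -, hl⟩ := isCompact_Icc.ultrafilter_le_nhds (U.map (fun k => φ k z))
      (by
        rw [le_principal_iff]
        exact Filter.mem_map.2 (Filter.univ_mem' (fun k => hbdd z k)))
    exact ⟨l, hl⟩
  choose L hL using key
  have hadd : ∀ x y : X, L (x + y) = L x + L y := by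
    intro x y
    have h1 : Tendsto (fun k => φ k (x + y)) U (𝓝 (L x + L y)) := by
      have := (hL x).add (hL y)
      simpa [map_add] using this
    exact tendsto_nhds_unique (hL (x + y)) h1
  have hsmul : ∀ (c : ℝ) (x : X), L (c • x) = c * L x := by
    intro c x
    have h1 : Tendsto (fun k => φ k (c • x)) U (𝓝 (c * L x)) := by
      have := (hL x).const_mul c
      simpa [_root_.map_smul, smul_eq_mul] using this
    exact tendsto_nhds_unique (hL (c • x)) h1
  have hnorm : ∀ z : X, ‖L z‖ ≤ 1 * ‖z‖ := by
    intro z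
    have hmem : L z ∈ Set.Icc (-‖z‖) ‖z‖ :=
      isClosed_Icc.mem_of_tendsto (hL z) (Filter.univ_mem' (fun k => hbdd z k))
    rw [one_mul, Real.norm_eq_abs, abs_le]
    exact ⟨hmem.1, hmem.2⟩
  let Φlin : X →ₗ[ℝ] ℝ :=
    { toFun := L
      map_add' := hadd
      map_smul' := by intro c x; simpa using hsmul c x }
  refine ⟨Φlin.mkContinuous 1 hnorm, Φlin.mkContinuous_norm_le zero_le_one hnorm, ?_⟩
  intro z l hzl
  have h1 : Tendsto (fun k => φ k z) U (𝓝 l) := hzl.mono_left hU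
  exact tendsto_nhds_unique (hL z) h1


lemma tendsto_on_closure_span {X : Type*} [NormedAddCommGroup X] [NormedSpace ℝ X]
    (φ : ℕ → X →L[ℝ] ℝ) (Φ : X →L[ℝ] ℝ) (hφ : ∀ k, ‖φ k‖ ≤ 1) (hΦ : ‖Φ‖ ≤ 1)
    (s : Set X) (h : ∀ z ∈ s, Tendsto (fun k => φ k z) atTop (𝓝 (Φ z)))
    {y : X} (hy : y ∈ closure (Submodule.span ℝ s : Set X)) :
    Tendsto (fun k => φ k y) atTop (𝓝 (Φ y)) := by
  have hspan : ∀ z ∈ Submodule.span ℝ s, Tendsto (fun k => φ k z) atTop (𝓝 (Φ z)) := by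
    intro z hz
    induction hz using Submodule.span_induction with
    | mem x hx => exact h x hx
    | zero => simpa using tendsto_const_nhds
    | add x y _ _ hx hy => simpa [map_add] using hx.add hy
    | smul c x _ hx =>
        have := hx.const_mul c
        simpa [_root_.map_smul, smul_eq_mul] using this
  rw [Metric.tendsto_atTop]
  intro δ hδ
  obtain ⟨z, hzs, hzy⟩ := Metric.mem_closure_iff.1 hy (δ / 3) (by linarith)
  have hz := hspan z hzs
  rw [Metric.tendsto_atTop] at hz
  obtain ⟨N, hN⟩ := hz (δ / 3) (by linarith)
  refine ⟨N, fun k hk => ?_⟩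
  have h1 : |φ k y - φ k z| ≤ ‖y - z‖ := by
    calc |φ k y - φ k z| = ‖φ k (y - z)‖ := by rw [map_sub]; rfl
      _ ≤ ‖φ k‖ * ‖y - z‖ := (φ k).le_opNorm _
      _ ≤ 1 * ‖y - z‖ := mul_le_mul_of_nonneg_right (hφ k) (norm_nonneg _)
      _ = ‖y - z‖ := one_mul _
  have h2 : |Φ z - Φ y| ≤ ‖z - y‖ := by
    calc |Φ z - Φ y| = ‖Φ (z - y)‖ := by rw [map_sub]; rfl
      _ ≤ ‖Φ‖ * ‖z - y‖ := Φ.le_opNorm _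
      _ ≤ 1 * ‖z - y‖ := mul_le_mul_of_nonneg_right hΦ (norm_nonneg _)
      _ = ‖z - y‖ := one_mul _
  have h3 : |φ k z - Φ z| < δ / 3 := by
    have := hN k hk
    rwa [Real.dist_eq] at this
  have hyz : ‖y - z‖ < δ / 3 := by
    have : dist y z < δ / 3 := hzy
    rwa [dist_eq_norm] at this
  have hzy' : ‖z - y‖ < δ / 3 := by rwa [norm_sub_rev]
  rw [Real.dist_eq]
  have habs : |φ k y - Φ y| ≤ |φ k y - φ k z| + |φ k z - Φ z| + |Φ z - Φ y| := by
    have := abs_add_three (φ k y - φ k z) (φ k z - Φ z) (Φ z - Φ y)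
    simpa using this
  linarith


lemma glide {ε : ℝ} (hε : 0 < ε) (a : ℕ → ℕ → ℝ) (ρ : ℕ → ℕ) (hρ : StrictMono ρ)
    (h1 : ∀ i, Tendsto (fun m => a m i) atTop (𝓝 0))
    (h2 : ∀ m, Summable (fun i => |a m i|))
    (h3 : ∀ᶠ m in atTop, ε ≤ a m (ρ m))
    (h4 : ∀ A : Set ℕ, Tendsto (fun m => ∑' i, A.indicator (a m) i) atTop (𝓝 0)) :
    False := by
  classical
  -- tails of each row are small
  have hT : ∀ m : ℕ, ∃ T : ℕ, ∑' i, |a m (i + T)| < ε / 8 := by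
    intro m
    have hs := h2 m
    have htail : Tendsto (fun T => ∑' i, |a m (i + T)|) atTop (𝓝 0) := by
      have hps := hs.hasSum.tendsto_sum_nat
      have heq : ∀ T : ℕ, ∑' i, |a m (i + T)| =
          (∑' i, |a m i|) - ∑ i ∈ Finset.range T, |a m i| := by
        intro T
        have := Summable.sum_add_tsum_nat_add (f := fun i => |a m i|) T hs
        linarith
      simp only [heq]
      have : Tendsto (fun T => (∑' i, |a m i|) - ∑ i ∈ Finset.range T, |a m i|)
          atTop (𝓝 ((∑' i, |a m i|) - ∑' i, |a m i|)) := tendsto_const_nhds.sub hps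
      simpa using this
    exact ((tendsto_order.1 htail).2 _ (by linarith)).exists
  choose T hTsmall using hT
  -- the recursive step
  have step : ∀ m : ℕ, ∃ m', m < m' ∧ ε ≤ a m' (ρ m') ∧
      (∑ i ∈ Finset.range (ρ m + 1), |a m' i|) < ε / 8 ∧ T m ≤ ρ m' := by
    intro m
    have e1 : ∀ᶠ m' in atTop, m < m' := eventually_gt_atTop m
    have e3 : Tendsto (fun m' => ∑ i ∈ Finset.range (ρ m + 1), |a m' i|) atTop (𝓝 0) := by
      have : Tendsto (fun m' => ∑ i ∈ Finset.range (ρ m + 1), |a m' i|) atTop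
          (𝓝 (∑ i ∈ Finset.range (ρ m + 1), (0:ℝ))) := by
        apply tendsto_finset_sum
        intro i _
        have := (h1 i).abs
        simpa using this
      simpa using this
    have e3' : ∀ᶠ m' in atTop, (∑ i ∈ Finset.range (ρ m + 1), |a m' i|) < ε / 8 :=
      (tendsto_order.1 e3).2 _ (by linarith)
    have e4 : ∀ᶠ m' in atTop, T m ≤ ρ m' := hρ.tendsto_atTop.eventually_ge_atTop (T m)
    exact ((e1.and (h3.and (e3'.and e4)))).exists.imp (fun m' h => ⟨h.1, h.2.1, h.2.2.1, h.2.2.2⟩)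
  choose next hlt hdiag hhead htailsep using step
  set q : ℕ → ℕ := fun j => next^[j + 1] 0 with hq
  have hqsucc : ∀ j, q (j + 1) = next (q j) := by
    intro j
    simp only [hq, Function.iterate_succ_apply']
  have hqmono : StrictMono q := strictMono_nat_of_lt_succ (by
    intro j; rw [hqsucc]; exact hlt (q j))
  have hqdiag : ∀ j, ε ≤ a (q j) (ρ (q j)) := by
    intro j
    cases j with
    | zero => exact hdiag 0
    | succ j' => rw [hqsucc]; exact hdiag (q j')
  have hqhead : ∀ j, (∑ i ∈ Finset.range (ρ (q j) + 1), |a (q (j + 1)) i|) < ε / 8 := by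
    intro j; rw [hqsucc]; exact hhead (q j)
  have hqtail : ∀ j, T (q j) ≤ ρ (q (j + 1)) := by
    intro j; rw [hqsucc]; exact htailsep (q j)
  set col : ℕ → ℕ := fun j => ρ (q j) with hcol
  have hcolmono : StrictMono col := hρ.comp hqmono
  set A : Set ℕ := Set.range col with hA
  -- lower bound for each row q j
  have hrow : ∀ j : ℕ, (3 * ε) / 4 ≤ ∑' i, A.indicator (a (q j)) i := by
    intro j
    set m := q j with hm
    have hsummAbs : Summable (fun i => |A.indicator (a m) i|) := by
      apply Summable.of_nonneg_of_le (fun i => abs_nonneg _) _ (h2 m)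
      intro i
      by_cases hi : i ∈ A
      · rw [Set.indicator_of_mem hi]
      · rw [Set.indicator_of_notMem hi]; simp [abs_nonneg]
    have hsumm : Summable (A.indicator (a m)) := by
      rw [← summable_abs_iff]; exact hsummAbs
    -- reindex by col
    have hvanish : ∀ i ∉ Set.range col, A.indicator (a m) i = 0 := by
      intro i hi
      exact Set.indicator_of_notMem (by rwa [hA]) _
    have hsum1 : HasSum (fun j' => A.indicator (a m) (col j')) (∑' i, A.indicator (a m) i) := by
      exact (Function.Injective.hasSum_iff hcolmono.injective hvanish).2 hsumm.hasSum
    have hcomp : (fun j' => A.indicator (a m) (col j')) = fun j' => a m (col j') := by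
      funext j'
      exact Set.indicator_of_mem (Set.mem_range_self j') _
    rw [hcomp] at hsum1
    have htsum1 : ∑' i, A.indicator (a m) i = ∑' j', a m (col j') := hsum1.tsum_eq.symm
    have hsumm1 : Summable fun j' => a m (col j') := hsum1.summable
    have hsplit : ∑' j', a m (col j') =
        a m (col j) + ∑' j', if j' = j then 0 else a m (col j') :=
      Summable.tsum_eq_add_tsum_ite hsumm1 j
    -- bound the rest
    set w : ℕ → ℝ := fun j' => if j' = j then 0 else a m (col j') with hw
    have hsummw : Summable fun j' => |w j'| := by
      apply Summable.of_nonneg_of_le (fun i => abs_nonneg _) _ ((h2 m).comp_injective hcolmono.injective)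
      intro j'
      by_cases hj : j' = j
      · simp [hw, hj, abs_nonneg]
      · simp [hw, hj]
    have habs : |∑' j', w j'| ≤ ∑' j', |w j'| := by
      have := norm_tsum_le_tsum_norm (f := w) (by simpa using hsummw)
      simpa using this
    have hsummw' : Summable w := by rw [← summable_abs_iff]; exact hsummw
    have hsplit2 : ∑' j', |w j'| =
        (∑ j' ∈ Finset.range (j + 1), |w j'|) + ∑' d, |w (d + (j + 1))| :=
      (Summable.sum_add_tsum_nat_add (j + 1) hsummw).symm
    -- head bound
    have hheadb : (∑ j' ∈ Finset.range (j + 1), |w j'|) < ε / 8 := by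
      cases j with
      | zero =>
          simp [hw]
          linarith [hTsmall (q 0), tsum_nonneg (L := SummationFilter.unconditional ℕ) (fun i => abs_nonneg (a (q 0) (i + T (q 0))))]
      | succ jj =>
          have heq : (∑ j' ∈ Finset.range (jj + 1 + 1), |w j'|) =
              ∑ j' ∈ Finset.range (jj + 1), |a m (col j')| := by
            rw [Finset.sum_range_succ]
            have : |w (jj + 1)| = 0 := by simp [hw]
            rw [this, add_zero]
            apply Finset.sum_congr rfl
            intro j' hj'
            have : j' ≠ jj + 1 := by
              have := Finset.mem_range.1 hj'; omega
            simp [hw, this]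
          rw [heq]
          have himg : (∑ j' ∈ Finset.range (jj + 1), |a m (col j')|) =
              ∑ i ∈ (Finset.range (jj + 1)).image col, |a m i| := by
            rw [Finset.sum_image]
            intro x _ y _ hxy
            exact hcolmono.injective hxy
          rw [himg]
          have hsub : (Finset.range (jj + 1)).image col ⊆ Finset.range (ρ (q jj) + 1) := by
            intro i hi
            obtain ⟨j', hj', rfl⟩ := Finset.mem_image.1 hi
            have hle : j' ≤ jj := by have := Finset.mem_range.1 hj'; omega
            have h5 : col j' ≤ col jj := hcolmono.monotone hle
            have h6 : col jj = ρ (q jj) := rfl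
            rw [Finset.mem_range]
            omega
          calc (∑ i ∈ (Finset.range (jj + 1)).image col, |a m i|)
              ≤ ∑ i ∈ Finset.range (ρ (q jj) + 1), |a m i| :=
                Finset.sum_le_sum_of_subset_of_nonneg hsub (fun _ _ _ => abs_nonneg _)
            _ < ε / 8 := hqhead jj
    -- tail bound
    have htailb : (∑' d, |w (d + (j + 1))|) ≤ ε / 8 := by
      have hcolge : ∀ d : ℕ, T (q j) ≤ col (d + (j + 1)) := by
        intro d
        calc T (q j) ≤ ρ (q (j + 1)) := hqtail j
          _ = col (j + 1) := rfl
          _ ≤ col (d + (j + 1)) := hcolmono.monotone (by omega)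
      have hle : (∑' d, |w (d + (j + 1))|) ≤ ∑' i, |a m (i + T (q j))| := by
        apply Summable.tsum_le_tsum_of_inj (fun d => col (d + (j + 1)) - T (q j))
        · intro d1 d2 hd
          simp only at hd
          have : col (d1 + (j + 1)) = col (d2 + (j + 1)) := by
            have e1 := hcolge d1
            have e2 := hcolge d2
            omega
          have := hcolmono.injective this
          omega
        · intro c _
          exact abs_nonneg _
        · intro d
          have hne : d + (j + 1) ≠ j := by omega
          have : w (d + (j + 1)) = a m (col (d + (j + 1))) := by simp [hw, hne]
          rw [this]
          have : col (d + (j + 1)) - T (q j) + T (q j) = col (d + (j + 1)) :=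
            Nat.sub_add_cancel (hcolge d)
          rw [this]
        · exact hsummw.comp_injective (fun d1 d2 hd => by omega)
        · exact (h2 m).comp_injective (fun i1 i2 hi => by omega)
      exact le_trans hle (hTsmall (q j)).le
    have hwbound : |∑' j', w j'| ≤ ε / 4 := by
      rw [hsplit2] at habs
      linarith
    have hdiagm : ε ≤ a m (col j) := hqdiag j
    rw [htsum1, hsplit]
    have := abs_le.1 hwbound
    linarith
  -- contradiction with h4
  have hA4 := (h4 A).comp hqmono.tendsto_atTop
  have := (tendsto_order.1 hA4).2 ((3 * ε) / 4) (by linarith)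
  obtain ⟨j, hj⟩ := this.exists
  have := hrow j
  simp only [Function.comp] at hj
  linarith

theorem pettis_integral_small_tails
    {X : Type*} [NormedAddCommGroup X] [NormedSpace ℝ X]
    (f : ℝ → X) (P : Set ℝ → X)
    (hweak : ∀ φ : X →L[ℝ] ℝ, AEMeasurable (fun t => φ (f t)) (volume.restrict (Set.Ici 0)))
    (hL1 : ∀ φ : X →L[ℝ] ℝ, IntegrableOn (fun t => φ (f t)) (Set.Ici 0))
    (hP : ∀ E : Set ℝ, MeasurableSet E → E ⊆ Set.Ici 0 →
      ∀ φ : X →L[ℝ] ℝ, φ (P E) = ∫ t in E, φ (f t)) :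
    ∀ ε : ℝ, 0 < ε → ∃ N : ℝ, 0 < N ∧
      ∀ K : Set ℝ, IsCompact K → K ⊆ Set.Ici N → ‖P K‖ < ε := by
  intro ε hε
  by_contra hcon
  push_neg at hcon
  have hcon' : ∀ N : ℝ, 0 < N → ∃ K : Set ℝ, IsCompact K ∧ K ⊆ Set.Ici N ∧ ε ≤ ‖P K‖ := by
    intro N hN
    obtain ⟨K, hK1, hK2, hK3⟩ := hcon N hN
    exact ⟨K, hK1, hK2, hK3⟩
  choose! Kf hKc hKs hKn using hcon'
  -- construct the sequence of bounds
  let bnd : ℕ → ℝ := fun n => Nat.rec 1 (fun _ p => max (sSup (Kf p) + 1) (p + 1)) n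
  have hbsucc : ∀ n, bnd (n + 1) = max (sSup (Kf (bnd n)) + 1) (bnd n + 1) := fun n => rfl
  have hbone : ∀ n, 1 ≤ bnd n := by
    intro n
    induction n with
    | zero => exact le_refl 1
    | succ n ih =>
        rw [hbsucc]
        have : bnd n + 1 ≤ max (sSup (Kf (bnd n)) + 1) (bnd n + 1) := le_max_right _ _
        linarith
  have hbpos : ∀ n, (0:ℝ) < bnd n := fun n => lt_of_lt_of_le one_pos (hbone n)
  have hbstep : ∀ n, bnd n + 1 ≤ bnd (n + 1) := fun n => by
    rw [hbsucc]; exact le_max_right _ _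
  have hbmono : StrictMono bnd := strictMono_nat_of_lt_succ (fun n => by
    have := hbstep n; linarith)
  set K : ℕ → Set ℝ := fun n => Kf (bnd n) with hKdef
  have hKcomp : ∀ n, IsCompact (K n) := fun n => hKc _ (hbpos n)
  have hKsub : ∀ n, K n ⊆ Set.Ici (bnd n) := fun n => hKs _ (hbpos n)
  have hKnorm : ∀ n, ε ≤ ‖P (K n)‖ := fun n => hKn _ (hbpos n)
  have hKup : ∀ n, K n ⊆ Set.Iio (bnd (n + 1)) := by
    intro n t ht
    have hbdd : BddAbove (K n) := (hKcomp n).bddAbove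
    have h1 : t ≤ sSup (K n) := le_csSup hbdd ht
    have h2 : sSup (Kf (bnd n)) + 1 ≤ bnd (n + 1) := by
      rw [hbsucc]; exact le_max_left _ _
    have : t < sSup (K n) + 1 := by linarith
    exact lt_of_lt_of_le this h2
  have hK0 : ∀ n, K n ⊆ Set.Ici (0:ℝ) := fun n =>
    (hKsub n).trans (Set.Ici_subset_Ici.2 (le_of_lt (hbpos n)))
  have hKmeas : ∀ n, MeasurableSet (K n) := fun n => (hKcomp n).isClosed.measurableSet
  have hdisj' : ∀ i j, i < j → Disjoint (K i) (K j) := by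
    intro i j hij
    rw [Set.disjoint_left]
    intro t hti htj
    have h1 : t < bnd (i + 1) := hKup i hti
    have h2 : bnd j ≤ t := hKsub j htj
    have h3 : bnd (i + 1) ≤ bnd j := hbmono.monotone hij
    linarith
  have hdisj : Pairwise (Function.onFun Disjoint K) := by
    intro i j hij
    rcases lt_or_gt_of_ne hij with h | h
    · exact hdisj' i j h
    · exact (hdisj' j i h).symm
  set x : ℕ → X := fun n => P (K n) with hxdef
  have hval : ∀ (ψ : X →L[ℝ] ℝ) (n : ℕ), ψ (x n) = ∫ t in K n, ψ (f t) :=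
    fun ψ n => hP (K n) (hKmeas n) (hK0 n) ψ
  -- summability of the absolute integrals over the K n
  have hSumAbs : ∀ ψ : X →L[ℝ] ℝ, Summable (fun n => ∫ t in K n, |ψ (f t)|) := by
    intro ψ
    have hint : IntegrableOn (fun t => |ψ (f t)|) (⋃ n, K n) := by
      have h0 : IntegrableOn (fun t => |ψ (f t)|) (Set.Ici 0) volume := (hL1 ψ).abs
      exact h0.mono_set (Set.iUnion_subset hK0)
    exact (hasSum_integral_iUnion hKmeas hdisj hint).summable
  have hAbsLe : ∀ (ψ : X →L[ℝ] ℝ) (n : ℕ), |ψ (x n)| ≤ ∫ t in K n, |ψ (f t)| := by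
    intro ψ n
    rw [hval ψ n]
    have h1 : ‖∫ t in K n, ψ (f t)‖ ≤ ∫ t in K n, ‖ψ (f t)‖ :=
      norm_integral_le_integral_norm _
    simpa [Real.norm_eq_abs] using h1
  have hSumAbsx : ∀ ψ : X →L[ℝ] ℝ, Summable (fun n => |ψ (x n)|) := fun ψ =>
    Summable.of_nonneg_of_le (fun n => abs_nonneg _) (hAbsLe ψ) (hSumAbs ψ)
  -- unions over subsets of ℕ
  set UA : Set ℕ → Set ℝ := fun A => ⋃ i : A, K ↑i with hUAdef
  have hUAmeas : ∀ A, MeasurableSet (UA A) := fun A => MeasurableSet.iUnion (fun i => hKmeas ↑i)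
  have hUAsub : ∀ A, UA A ⊆ Set.Ici (0:ℝ) := fun A => Set.iUnion_subset (fun i => hK0 ↑i)
  have hAsum : ∀ (A : Set ℕ) (ψ : X →L[ℝ] ℝ),
      HasSum (A.indicator fun n => ψ (x n)) (ψ (P (UA A))) := by
    intro A ψ
    have hdisjA : Pairwise (Function.onFun Disjoint fun i : A => K ↑i) := by
      intro i j hij
      exact hdisj (fun h => hij (Subtype.ext h))
    have hint : IntegrableOn (fun t => ψ (f t)) (UA A) := (hL1 ψ).mono_set (hUAsub A)
    have h1 : HasSum (fun i : A => ∫ t in K ↑i, ψ (f t)) (∫ t in UA A, ψ (f t)) :=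
      hasSum_integral_iUnion (fun i : A => hKmeas ↑i) hdisjA hint
    have h2 : (fun i : A => ∫ t in K ↑i, ψ (f t)) = fun i : A => ψ (x ↑i) := by
      funext i; rw [hval ψ ↑i]
    rw [h2] at h1
    have h3 : ψ (P (UA A)) = ∫ t in UA A, ψ (f t) := hP (UA A) (hUAmeas A) (hUAsub A) ψ
    rw [h3]
    exact hasSum_subtype_iff_indicator.1 h1
  -- norming functionals
  have hxne : ∀ n, x n ≠ 0 := by
    intro n h
    have h1 : ε ≤ ‖x n‖ := hKnorm n
    rw [h, norm_zero] at h1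
    linarith
  have hex : ∀ n, ∃ g : X →L[ℝ] ℝ, ‖g‖ = 1 ∧ g (x n) = ‖x n‖ :=
    fun n => exists_dual_vector ℝ (x n) (norm_ne_zero_iff.2 (hxne n))
  choose φ hφ1 hφ2 using hex
  -- extract a pointwise-convergent subsequence on the x i
  set S : Set (ℕ → ℝ) := Set.univ.pi fun i => Set.Icc (-‖x i‖) ‖x i‖ with hSdef
  have hScomp : IsCompact S := isCompact_univ_pi fun i => isCompact_Icc
  have hmemS : ∀ k, (fun i => φ k (x i)) ∈ S := by
    intro k
    rw [hSdef, Set.mem_univ_pi]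
    intro i
    have h1 : |φ k (x i)| ≤ ‖x i‖ := by
      calc |φ k (x i)| = ‖φ k (x i)‖ := rfl
        _ ≤ ‖φ k‖ * ‖x i‖ := (φ k).le_opNorm _
        _ = ‖x i‖ := by rw [hφ1 k, one_mul]
    exact abs_le.1 h1
  obtain ⟨L, -, ρ, hρ, hconv⟩ := hScomp.isSeqCompact hmemS
  have hcomp : ∀ i, Tendsto (fun m => φ (ρ m) (x i)) atTop (𝓝 (L i)) := by
    intro i
    have := tendsto_pi_nhds.1 hconv i
    simpa [Function.comp] using this
  obtain ⟨Φ, hΦnorm, hΦlim⟩ :=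
    exists_limit_functional (fun m => φ (ρ m)) (fun m => (hφ1 (ρ m)).le)
  have hxconv : ∀ i, Tendsto (fun m => φ (ρ m) (x i)) atTop (𝓝 (Φ (x i))) := by
    intro i
    rw [hΦlim (x i) (L i) (hcomp i)]
    exact hcomp i
  -- the partial unions lie in the closed span of the x i
  set Y : Submodule ℝ X := (Submodule.span ℝ (Set.range x)).topologicalClosure with hYdef
  have hxY : ∀ i, x i ∈ Y :=
    fun i => (Submodule.le_topologicalClosure _) (Submodule.subset_span (Set.mem_range_self i))
  have hymem : ∀ A : Set ℕ, P (UA A) ∈ Y := by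
    intro A
    by_contra hne
    obtain ⟨g, u, hgu, hgy⟩ := geometric_hahn_banach_closed_point
      Y.convex (Submodule.isClosed_topologicalClosure _) hne
    have hg0 : ∀ z ∈ Y, g z = 0 := by
      intro z hz
      by_contra hgz
      have hmem2 : ((|u| + 1) / g z) • z ∈ Y := Y.smul_mem _ hz
      have h5 := hgu _ hmem2
      rw [_root_.map_smul, smul_eq_mul, div_mul_cancel₀ _ hgz] at h5
      have h6 : u ≤ |u| := le_abs_self u
      linarith
    have hu0 : 0 < u := by
      have := hgu 0 Y.zero_mem
      rwa [map_zero] at this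
    have hzero : (A.indicator fun n => g (x n)) = fun _ => (0:ℝ) := by
      funext n
      by_cases hn : n ∈ A
      · rw [Set.indicator_of_mem hn]; exact hg0 _ (hxY n)
      · rw [Set.indicator_of_notMem hn]
    have h1 := hAsum A g
    rw [hzero] at h1
    have h2 : g (P (UA A)) = 0 := h1.unique hasSum_zero
    linarith
  have hyconv : ∀ A : Set ℕ,
      Tendsto (fun m => φ (ρ m) (P (UA A))) atTop (𝓝 (Φ (P (UA A)))) := by
    intro A
    apply tendsto_on_closure_span (fun m => φ (ρ m)) Φ (fun m => (hφ1 (ρ m)).le) hΦnorm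
      (Set.range x) (by rintro z ⟨i, rfl⟩; exact hxconv i)
    rw [← Submodule.topologicalClosure_coe (Submodule.span ℝ (Set.range x))]
    exact hymem A
  -- set up the gliding hump
  set a : ℕ → ℕ → ℝ := fun m i => φ (ρ m) (x i) - Φ (x i) with hadef
  have h1g : ∀ i, Tendsto (fun m => a m i) atTop (𝓝 0) := by
    intro i
    have := (hxconv i).sub (tendsto_const_nhds (x := Φ (x i)))
    simpa using this
  have h2g : ∀ m, Summable (fun i => |a m i|) := by
    intro m
    apply Summable.of_nonneg_of_le (fun i => abs_nonneg _) _
      ((hSumAbsx (φ (ρ m))).add (hSumAbsx Φ))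
    intro i
    exact abs_sub _ _
  have hΦx0 : Tendsto (fun i => Φ (x i)) atTop (𝓝 0) := by
    have hsum : Summable fun i => Φ (x i) := summable_abs_iff.1 (hSumAbsx Φ)
    exact hsum.tendsto_atTop_zero
  have h3g : ∀ᶠ m in atTop, ε / 2 ≤ a m (ρ m) := by
    have h1 : Tendsto (fun m => Φ (x (ρ m))) atTop (𝓝 0) := hΦx0.comp hρ.tendsto_atTop
    have h2 : Tendsto (fun m => |Φ (x (ρ m))|) atTop (𝓝 0) := by
      have := h1.abs; simpa using this
    have h3 : ∀ᶠ m in atTop, |Φ (x (ρ m))| < ε / 2 :=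
      (tendsto_order.1 h2).2 _ (by linarith)
    filter_upwards [h3] with m hm
    have h4 : φ (ρ m) (x (ρ m)) = ‖x (ρ m)‖ := hφ2 (ρ m)
    have h5 : ε ≤ ‖x (ρ m)‖ := hKnorm (ρ m)
    have h6 := abs_lt.1 hm
    rw [hadef]
    simp only
    rw [h4]
    linarith
  have h4g : ∀ A : Set ℕ, Tendsto (fun m => ∑' i, A.indicator (a m) i) atTop (𝓝 0) := by
    intro A
    have hid : ∀ m, ∑' i, A.indicator (a m) i = φ (ρ m) (P (UA A)) - Φ (P (UA A)) := by
      intro m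
      have hs1 := hAsum A (φ (ρ m))
      have hs2 := hAsum A Φ
      have hs3 := hs1.sub hs2
      have heq : (fun n => (A.indicator fun n => φ (ρ m) (x n)) n -
          (A.indicator fun n => Φ (x n)) n) = A.indicator (a m) := by
        funext n
        by_cases hn : n ∈ A
        · simp [Set.indicator_of_mem hn, hadef]
        · simp [Set.indicator_of_notMem hn]
      rw [heq] at hs3
      exact hs3.tsum_eq
    simp only [hid]
    have := (hyconv A).sub (tendsto_const_nhds (x := Φ (P (UA A))))
    simpa using this
  exact glide (by linarith : (0:ℝ) < ε / 2) a ρ hρ h1g h2g h3g h4g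
end

section
/- Let (T_t)_{t≥0} be a jointly measurable C0-semigroup on a separable Banach space X with an invariant ergodic Borel probability measure μ with full support. Then μ-almost every x ∈ X has dense orbit under the semigroup with positive lower density visits: for every non-empty open U ⊆ X, the set {t ≥ 0 : T_t x ∈ U} has lower density at least μ(U) > 0; in particular (T_t) is frequently hypercyclic. -/
open MeasureTheory Filter

lemma my_bddAbove {ι : Type*} {f : Filter ι} [f.NeBot] {u : ι → ℝ} {C : ℝ}
    (hub : ∀ n, u n ≤ C) : BddAbove {a | ∀ᶠ n in f, a ≤ u n} := by
  refine ⟨C, fun a ha => ?_⟩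
  obtain ⟨n, hn⟩ := ha.exists
  exact hn.trans (hub n)

/-- lower bound for liminf from an eventual bound, for bounded-above sequences -/
lemma my_le_liminf {ι : Type*} {f : Filter ι} [f.NeBot] {u : ι → ℝ} {c C : ℝ}
    (hub : ∀ n, u n ≤ C) (h : ∀ᶠ n in f, c ≤ u n) : c ≤ liminf u f := by
  rw [liminf_eq]; exact le_csSup (my_bddAbove hub) h

/-- upper bound for liminf from a frequent bound, for bounded-below sequences -/
lemma my_liminf_le {ι : Type*} {f : Filter ι} [f.NeBot] {u : ι → ℝ} {c b : ℝ}
    (hlb : ∀ n, b ≤ u n) (h : ∃ᶠ n in f, u n ≤ c) : liminf u f ≤ c := by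
  rw [liminf_eq]
  refine csSup_le ⟨b, Eventually.of_forall hlb⟩ (fun a ha => ?_)
  obtain ⟨n, hn1, hn2⟩ := (h.and_eventually ha).exists
  exact hn2.trans hn1

/-- liminf comparison with ε slack -/
lemma my_liminf_le_liminf {ι : Type*} {f : Filter ι} [f.NeBot] {u v : ι → ℝ} {b C : ℝ}
    (hu0 : ∀ n, b ≤ u n) (hv1 : ∀ n, v n ≤ C)
    (h : ∀ ε : ℝ, 0 < ε → ∀ᶠ n in f, u n ≤ v n + ε) : liminf u f ≤ liminf v f := by
  rw [liminf_eq]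
  refine csSup_le ⟨b, Eventually.of_forall hu0⟩ (fun a ha => ?_)
  have key : ∀ ε : ℝ, 0 < ε → a - ε ≤ liminf v f := by
    intro ε hε
    refine my_le_liminf hv1 ?_
    filter_upwards [ha, h ε hε] with n h1 h2
    linarith
  by_contra hc
  push_neg at hc
  have := key ((a - liminf v f)/2) (by linarith)
  linarith
open scoped Classical

lemma my_kw_key {X : Type*}
    (S : X → X) (F : X → ℝ) (hF0 : ∀ x, 0 ≤ F x)
    (ψ : X → ℝ) (hψ0 : ∀ x, 0 ≤ ψ x) (hψS : ∀ x, ψ (S x) = ψ x)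
    (ε : ℝ) (hε : 0 < ε) (M : ℕ) (hM : 1 ≤ M)
    (E : Set X)
    (hE : ∀ x, x ∉ E → ∃ n : ℕ, 1 ≤ n ∧ n ≤ M ∧
      ∑ k ∈ Finset.range n, F (S^[k] x) ≤ n * (ψ x + ε))
    (G : X → ℝ) (hGE : ∀ x ∈ E, G x = 0) (hGF : ∀ x, G x ≤ F x)
    (hG0 : ∀ x, 0 ≤ G x) (hG1 : ∀ x, G x ≤ 1) :
    ∀ N : ℕ, ∀ x, ∑ k ∈ Finset.range N, G (S^[k] x) ≤ N * (ψ x + ε) + M := by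
  have hψit : ∀ (k : ℕ) x, ψ (S^[k] x) = ψ x := by
    intro k
    induction k with
    | zero => intro x; rfl
    | succ k ih => intro x; rw [Function.iterate_succ_apply, ih, hψS]
  intro N
  induction N using Nat.strong_induction_on with
  | _ N ih =>
    intro x
    have hψε : 0 ≤ ψ x + ε := by have := hψ0 x; linarith
    rcases Nat.lt_or_ge N 1 with hN | hN
    · interval_cases N
      simpa using by positivity
    rcases le_or_gt N M with hNM | hNM
    · -- N ≤ M : trivial bound by N ≤ M
      have h1 : ∑ k ∈ Finset.range N, G (S^[k] x) ≤ N := by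
        calc ∑ k ∈ Finset.range N, G (S^[k] x) ≤ ∑ k ∈ Finset.range N, 1 :=
              Finset.sum_le_sum (fun k _ => hG1 _)
          _ = N := by simp
      have h2 : (N:ℝ) ≤ M := by exact_mod_cast hNM
      nlinarith [h1, h2]
    · by_cases hx : x ∈ E
      · obtain ⟨N', rfl⟩ : ∃ N', N = N' + 1 := ⟨N - 1, by omega⟩
        rw [Finset.sum_range_succ']
        have h1 : ∀ k, G (S^[k+1] x) = G (S^[k] (S x)) := by
          intro k; rw [Function.iterate_succ_apply]
        simp only [h1]
        rw [Function.iterate_zero_apply, hGE x hx, add_zero]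
        have h3 := ih N' (by omega) (S x)
        rw [hψS] at h3
        have hc : (N':ℝ) * (ψ x + ε) ≤ (N' + 1 : ℕ) * (ψ x + ε) := by
          push_cast; nlinarith
        linarith
      · obtain ⟨n, hn1, hnM, hsum⟩ := hE x hx
        have hnN : n ≤ N := by omega
        obtain ⟨m, rfl⟩ : ∃ m, N = n + m := ⟨N - n, by omega⟩
        rw [Finset.sum_range_add]
        have h1 : ∀ k, G (S^[n + k] x) = G (S^[k] (S^[n] x)) := by
          intro k; rw [add_comm, Function.iterate_add_apply]
        simp only [h1]
        have hfirst : ∑ k ∈ Finset.range n, G (S^[k] x) ≤ n * (ψ x + ε) :=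
          le_trans (Finset.sum_le_sum (fun k _ => hGF _)) hsum
        have hsecond := ih m (by omega) (S^[n] x)
        rw [hψit n x] at hsecond
        push_cast
        push_cast at hfirst hsecond
        linarith


lemma my_integrable {X : Type*} [MeasurableSpace X] {μ : Measure X} [IsProbabilityMeasure μ]
    {F : X → ℝ} (hFm : Measurable F) (hF0 : ∀ x, 0 ≤ F x) (hF1 : ∀ x, F x ≤ 1) :
    Integrable F μ := by
  refine Integrable.mono' (integrable_const 1) hFm.aestronglyMeasurable ?_
  filter_upwards with x
  rw [Real.norm_eq_abs, abs_le]
  constructor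
  · linarith [hF0 x]
  · exact hF1 x

lemma my_kw {X : Type*} [MeasurableSpace X] (μ : Measure X) [IsProbabilityMeasure μ]
    (S : X → X) (hSm : Measurable S) (hS : Measure.map S μ = μ)
    (F : X → ℝ) (hFm : Measurable F) (hF0 : ∀ x, 0 ≤ F x) (hF1 : ∀ x, F x ≤ 1)
    (ψ : X → ℝ) (hψm : Measurable ψ) (hψ0 : ∀ x, 0 ≤ ψ x) (hψ1 : ∀ x, ψ x ≤ 1)
    (hψS : ∀ x, ψ (S x) = ψ x)
    (hfreq : ∀ x, ∀ ε : ℝ, 0 < ε → ∀ m : ℕ, ∃ n, m ≤ n ∧ 1 ≤ n ∧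
        ∑ k ∈ Finset.range n, F (S^[k] x) ≤ n * (ψ x + ε)) :
    ∫ x, F x ∂μ ≤ ∫ x, ψ x ∂μ := by
  have hFi : Integrable F μ := my_integrable hFm hF0 hF1
  have hψi : Integrable ψ μ := my_integrable hψm hψ0 hψ1
  refine le_of_forall_pos_le_add (fun ε hε => ?_)
  have hε2 : 0 < ε / 2 := by linarith
  -- the bad sets
  set E : ℕ → Set X := fun M => {x | ∀ n : ℕ, 1 ≤ n → n ≤ M →
    (n:ℝ) * (ψ x + ε/2) < ∑ k ∈ Finset.range n, F (S^[k] x)} with hEdef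
  have hEm : ∀ M, MeasurableSet (E M) := by
    intro M
    have : E M = ⋂ n : ℕ, ⋂ _ : 1 ≤ n, ⋂ _ : n ≤ M,
        {x | (n:ℝ) * (ψ x + ε/2) < ∑ k ∈ Finset.range n, F (S^[k] x)} := by
      ext x; simp [hEdef, Set.mem_iInter]
    rw [this]
    refine MeasurableSet.iInter (fun n => MeasurableSet.iInter (fun _ =>
      MeasurableSet.iInter (fun _ => ?_)))
    have h1 : Measurable fun x => (n:ℝ) * (ψ x + ε/2) := by fun_prop
    have h2 : Measurable fun x => ∑ k ∈ Finset.range n, F (S^[k] x) := by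
      refine Finset.measurable_sum _ (fun k _ => hFm.comp (hSm.iterate k))
    exact measurableSet_lt h1 h2
  have hEanti : Antitone E := by
    intro a b hab x hx n h1 h2
    exact hx n h1 (h2.trans hab)
  have hEempty : ⋂ M, E M = ∅ := by
    ext x
    simp only [Set.mem_iInter, Set.mem_empty_iff_false, iff_false]
    intro hx
    obtain ⟨n, hmn, hn1, hle⟩ := hfreq x (ε/2) hε2 1
    exact absurd hle (not_le.mpr (hx n n hn1 le_rfl))
  -- choose M with small bad set
  have htend : Tendsto (fun M => μ (E M)) atTop (nhds 0) := by
    have h0 := tendsto_measure_iInter_atTop (μ := μ)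
      (fun M => (hEm M).nullMeasurableSet) hEanti ⟨0, measure_ne_top μ _⟩
    rw [hEempty] at h0
    simpa [Function.comp_def] using h0
  have hev : ∀ᶠ M in atTop, μ (E M) < ENNReal.ofReal (ε/2) := by
    refine htend.eventually_lt_const ?_
    simp [ENNReal.ofReal_pos, hε2]
  obtain ⟨M, hM1, hMμ⟩ : ∃ M : ℕ, 1 ≤ M ∧ μ (E M) < ENNReal.ofReal (ε/2) := by
    obtain ⟨M, hM⟩ := (hev.and (eventually_ge_atTop 1)).exists
    exact ⟨M, hM.2, hM.1⟩
  set G : X → ℝ := fun x => if x ∈ E M then 0 else F x with hGdef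
  have hGm : Measurable G := Measurable.ite (hEm M) measurable_const hFm
  have hGE : ∀ x ∈ E M, G x = 0 := fun x hx => by simp [hGdef, hx]
  have hGF : ∀ x, G x ≤ F x := by
    intro x; simp only [hGdef]; split
    · exact hF0 x
    · exact le_rfl
  have hG0 : ∀ x, 0 ≤ G x := by
    intro x; simp only [hGdef]; split
    · exact le_rfl
    · exact hF0 x
  have hG1 : ∀ x, G x ≤ 1 := fun x => (hGF x).trans (hF1 x)
  have hE' : ∀ x, x ∉ E M → ∃ n : ℕ, 1 ≤ n ∧ n ≤ M ∧
      ∑ k ∈ Finset.range n, F (S^[k] x) ≤ n * (ψ x + ε/2) := by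
    intro x hx
    simp only [hEdef, Set.mem_setOf_eq, not_forall, not_lt] at hx
    obtain ⟨n, h1, h2, h3⟩ := hx
    exact ⟨n, h1, h2, h3⟩
  have key := my_kw_key S F hF0 ψ hψ0 hψS (ε/2) hε2 M hM1 (E M) hE' G hGE hGF hG0 hG1
  -- integrate the key inequality
  have hmp : MeasurePreserving S μ μ := ⟨hSm, hS⟩
  have hGcomp : ∀ k : ℕ, ∫ x, G (S^[k] x) ∂μ = ∫ x, G x ∂μ := by
    intro k
    have hmap := (hmp.iterate k).map_eq
    conv_rhs => rw [← hmap]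
    rw [integral_map (hmp.iterate k).measurable.aemeasurable]
    rw [hmap]
    exact hGm.aestronglyMeasurable
  have hGi : Integrable G μ := my_integrable hGm hG0 hG1
  have hGki : ∀ k : ℕ, Integrable (fun x => G (S^[k] x)) μ :=
    fun k => my_integrable (hGm.comp (hmp.iterate k).measurable)
      (fun x => hG0 _) (fun x => hG1 _)
  have hint : ∀ N : ℕ, (N:ℝ) * ∫ x, G x ∂μ ≤ (N:ℝ) * ((∫ x, ψ x ∂μ) + ε/2) + M := by
    intro N
    have h1 : ∫ x, (∑ k ∈ Finset.range N, G (S^[k] x)) ∂μ = (N:ℝ) * ∫ x, G x ∂μ := by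
      rw [integral_finset_sum _ (fun k _ => hGki k)]
      simp only [hGcomp]
      rw [Finset.sum_const, Finset.card_range, nsmul_eq_mul]
    have h2 : ∫ x, (∑ k ∈ Finset.range N, G (S^[k] x)) ∂μ ≤
        ∫ x, ((N:ℝ) * (ψ x + ε/2) + M) ∂μ := by
      refine integral_mono (integrable_finset_sum _ (fun k _ => hGki k)) ?_ (key N)
      exact ((hψi.add (integrable_const _)).const_mul _).add (integrable_const _)
    rw [h1] at h2
    refine h2.trans (le_of_eq ?_)
    have hadd : Integrable (fun x => (N:ℝ) * (ψ x + ε/2)) μ :=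
      (hψi.add (integrable_const (ε/2))).const_mul _
    rw [integral_add hadd (integrable_const _), MeasureTheory.integral_const_mul,
      integral_add hψi (integrable_const _)]
    simp [measure_univ]
  have hG_le : ∫ x, G x ∂μ ≤ (∫ x, ψ x ∂μ) + ε/2 := by
    refine le_of_forall_pos_le_add (fun δ hδ => ?_)
    obtain ⟨N, hN1, hN2⟩ : ∃ N : ℕ, 1 ≤ N ∧ (M:ℝ) / N < δ := by
      obtain ⟨N, hN⟩ := exists_nat_gt (max 1 ((M:ℝ)/δ))
      have h1 : (1:ℝ) < N := (le_max_left _ _).trans_lt hN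
      have h2 : (M:ℝ)/δ < N := (le_max_right _ _).trans_lt hN
      have hNpos : (0:ℝ) < N := by linarith
      refine ⟨N, by exact_mod_cast h1.le, ?_⟩
      rw [div_lt_iff₀ hNpos]
      rw [div_lt_iff₀ hδ] at h2
      linarith
    have hNpos : (0:ℝ) < N := by exact_mod_cast hN1
    have hNM : (N:ℝ) * ((M:ℝ)/N) = M := by field_simp
    have h3 : ∫ x, G x ∂μ ≤ (∫ x, ψ x ∂μ) + ε/2 + (M:ℝ)/N := by
      nlinarith [hint N, hNpos, hNM]
    linarith [hN2]
  -- compare F with G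
  have hFG : ∫ x, F x ∂μ ≤ (∫ x, G x ∂μ) + ε/2 := by
    have h1 : ∀ x, F x - G x = Set.indicator (E M) F x := by
      intro x
      simp only [hGdef, Set.indicator]
      split <;> ring
    have h2 : ∫ x, (F x - G x) ∂μ ≤ (μ (E M)).toReal := by
      have h3 : ∫ x, (F x - G x) ∂μ = ∫ x, Set.indicator (E M) F x ∂μ := by
        exact integral_congr_ae (Eventually.of_forall h1)
      rw [h3]
      have h4 : ∫ x, Set.indicator (E M) F x ∂μ ≤
          ∫ x, Set.indicator (E M) (fun _ => (1:ℝ)) x ∂μ := by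
        refine integral_mono (hFi.indicator (hEm M)) ((integrable_const 1).indicator (hEm M)) ?_
        intro x
        exact Set.indicator_le_indicator (hF1 x)
      have h5 : ∫ x, Set.indicator (E M) (fun _ => (1:ℝ)) x ∂μ = (μ (E M)).toReal := by
        rw [integral_indicator_const (1:ℝ) (hEm M)]; simp [measureReal_def]
      linarith [h4, h5.le, h5.ge]
    have h6 : (μ (E M)).toReal ≤ ε/2 := by
      have := (ENNReal.toReal_le_toReal (measure_ne_top μ _) ENNReal.ofReal_ne_top).mpr hMμ.le
      rwa [ENNReal.toReal_ofReal hε2.le] at this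
    have h7 : ∫ x, (F x - G x) ∂μ = (∫ x, F x ∂μ) - ∫ x, G x ∂μ := integral_sub hFi hGi
    linarith
  linarith [hFG, hG_le]

lemma my_ratio {v : ENNReal} {N : ℝ} (hv : v ≤ ENNReal.ofReal N) :
    0 ≤ v.toReal / N ∧ v.toReal / N ≤ 1 := by
  rcases le_or_gt N 0 with hN | hN
  · have h0 : v = 0 := le_antisymm (hv.trans (by simp [ENNReal.ofReal_eq_zero.mpr hN])) zero_le
    simp [h0]
  · have hfin : v ≠ ⊤ := (hv.trans_lt ENNReal.ofReal_lt_top).ne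
    have h1 : v.toReal ≤ N := by
      have := ENNReal.toReal_mono ENNReal.ofReal_ne_top hv
      rwa [ENNReal.toReal_ofReal hN.le] at this
    constructor
    · positivity
    · rw [div_le_one hN]; exact h1

set_option maxHeartbeats 2000000 in
lemma my_core {X : Type*} [NormedAddCommGroup X] [NormedSpace ℝ X]
    [MeasurableSpace X] [BorelSpace X]
    (T : ℝ → X →L[ℝ] X)
    (hT0 : T 0 = ContinuousLinearMap.id ℝ X)
    (hTadd : ∀ s t : ℝ, 0 ≤ s → 0 ≤ t → T (s + t) = (T s).comp (T t))
    (hTjoint : Measurable (fun p : ℝ × X => T p.1 p.2))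
    (μ : Measure X) [IsProbabilityMeasure μ]
    (hinv : ∀ t : ℝ, 0 ≤ t → ∀ A : Set X, MeasurableSet A → μ (T t ⁻¹' A) = μ A)
    (hergodic : ∀ A : Set X, MeasurableSet A →
      (∀ t : ℝ, 0 ≤ t → T t ⁻¹' A = A) → μ A = 0 ∨ μ A = 1)
    (V : Set X) (hV : MeasurableSet V) :
    ∀ᵐ x ∂μ, (μ V).toReal ≤ liminf (fun N : ℝ =>
      (volume {t : ℝ | 0 ≤ t ∧ t ≤ N ∧ T t x ∈ V}).toReal / N) atTop := by
  -- basic measurability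
  set St : X → ℝ → Set ℝ := fun x N => {t : ℝ | 0 ≤ t ∧ t ≤ N ∧ T t x ∈ V} with hStdef
  have hvol_le : ∀ x N, volume (St x N) ≤ ENNReal.ofReal N := by
    intro x N
    have h1 : St x N ⊆ Set.Icc 0 N := fun t ht => Set.mem_Icc.mpr ⟨ht.1, ht.2.1⟩
    calc volume (St x N) ≤ volume (Set.Icc 0 N) := measure_mono h1
      _ = ENNReal.ofReal N := by rw [Real.volume_Icc, sub_zero]
  have hvol_fin : ∀ x N, volume (St x N) ≠ ⊤ :=
    fun x N => ((hvol_le x N).trans_lt ENNReal.ofReal_lt_top).ne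
  set W : X → ℝ → ℝ := fun x N => (volume (St x N)).toReal with hWdef
  have hW0 : ∀ x N, 0 ≤ W x N := fun x N => ENNReal.toReal_nonneg
  have hWmono : ∀ x (N N' : ℝ), N ≤ N' → W x N ≤ W x N' := by
    intro x N N' h
    refine ENNReal.toReal_mono (hvol_fin x N') (measure_mono ?_)
    exact fun t ht => ⟨ht.1, ht.2.1.trans h, ht.2.2⟩
  have hr0 : ∀ x N, 0 ≤ W x N / N := fun x N => (my_ratio (hvol_le x N)).1
  have hr1 : ∀ x N, W x N / N ≤ 1 := fun x N => (my_ratio (hvol_le x N)).2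
  -- shift identity
  have hshift : ∀ (s : ℝ), 0 ≤ s → ∀ x (N : ℝ),
      volume (St (T s x) N) = volume {t : ℝ | s ≤ t ∧ t ≤ s + N ∧ T t x ∈ V} := by
    intro s hs x N
    have hpre : (fun t : ℝ => t + s) ⁻¹' {t : ℝ | s ≤ t ∧ t ≤ s + N ∧ T t x ∈ V}
        = St (T s x) N := by
      ext t
      simp only [Set.mem_preimage, Set.mem_setOf_eq, hStdef]
      constructor
      · rintro ⟨h1, h2, h3⟩
        have ht : 0 ≤ t := by linarith
        refine ⟨ht, by linarith, ?_⟩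
        have heq := hTadd t s ht hs
        rw [heq] at h3
        simpa using h3
      · rintro ⟨h1, h2, h3⟩
        refine ⟨by linarith, by linarith, ?_⟩
        have heq := hTadd t s h1 hs
        rw [heq]
        simpa using h3
    rw [← hpre, measure_preimage_add_right]
  -- split identity
  have hsplit : ∀ x (a b : ℝ), 0 ≤ a → 0 ≤ b →
      volume (St x (a + b)) = volume (St x a) + volume {t : ℝ | a ≤ t ∧ t ≤ a + b ∧ T t x ∈ V} := by
    intro x a b ha hb
    have hTm : Measurable (fun t : ℝ => T t x) :=
      hTjoint.comp (measurable_id.prodMk measurable_const)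
    have hmV : MeasurableSet ((fun t : ℝ => T t x) ⁻¹' V) := hTm hV
    have hm2 : NullMeasurableSet {t : ℝ | a ≤ t ∧ t ≤ a + b ∧ T t x ∈ V} volume := by
      refine (MeasurableSet.nullMeasurableSet ?_)
      have : {t : ℝ | a ≤ t ∧ t ≤ a + b ∧ T t x ∈ V}
          = (Set.Icc a (a+b)) ∩ ((fun t : ℝ => T t x) ⁻¹' V) := by
        ext t; simp only [Set.mem_inter_iff, Set.mem_Icc, Set.mem_preimage, Set.mem_setOf_eq]; tauto
      rw [this]
      exact measurableSet_Icc.inter hmV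
    have hdisj : MeasureTheory.AEDisjoint volume (St x a) {t : ℝ | a ≤ t ∧ t ≤ a + b ∧ T t x ∈ V} := by
      have hsub : St x a ∩ {t : ℝ | a ≤ t ∧ t ≤ a + b ∧ T t x ∈ V} ⊆ {a} := by
        rintro t ⟨⟨h1, h2, _⟩, ⟨h4, _, _⟩⟩
        exact Set.mem_singleton_iff.mpr (le_antisymm h2 h4)
      exact measure_mono_null hsub Real.volume_singleton
    have hunion : St x (a + b) = St x a ∪ {t : ℝ | a ≤ t ∧ t ≤ a + b ∧ T t x ∈ V} := by
      ext t
      simp only [hStdef, Set.mem_union, Set.mem_setOf_eq]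
      constructor
      · rintro ⟨h1, h2, h3⟩
        rcases le_or_gt t a with h | h
        · exact Or.inl ⟨h1, h, h3⟩
        · exact Or.inr ⟨h.le, h2, h3⟩
      · rintro (⟨h1, h2, h3⟩ | ⟨h1, h2, h3⟩)
        · exact ⟨h1, by linarith, h3⟩
        · exact ⟨by linarith, h2, h3⟩
    rw [hunion, measure_union₀ hm2 hdisj]
  -- the time-one map
  set S : X → X := fun y => T 1 y with hSdef
  have hSm : Measurable S :=
    hTjoint.comp (measurable_const.prodMk measurable_id)
  have hTnat : ∀ (k : ℕ) (x : X), S^[k] x = T (k : ℝ) x := by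
    intro k
    induction k with
    | zero => intro x; simp [hT0]
    | succ k ih =>
      intro x
      rw [Function.iterate_succ_apply', ih, hSdef]
      have heq := hTadd 1 k zero_le_one (Nat.cast_nonneg k)
      have : ((k:ℝ) + 1) = (1:ℝ) + k := by ring
      push_cast
      rw [this, heq]
      simp
  -- unit-interval function
  set F : X → ℝ := fun y => W y 1 with hFdef
  have hF0 : ∀ y, 0 ≤ F y := fun y => hW0 y 1
  have hF1 : ∀ y, F y ≤ 1 := by
    intro y
    have := hr1 y 1
    simpa using this
  -- block identity
  have hblock : ∀ x (n : ℕ), W x (n : ℝ) = ∑ k ∈ Finset.range n, F (S^[k] x) := by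
    intro x n
    induction n with
    | zero =>
      simp only [Nat.cast_zero, Finset.range_zero, Finset.sum_empty, hWdef]
      have h0 : volume (St x 0) = 0 := by
        have hsub : St x 0 ⊆ {(0:ℝ)} := by
          rintro t ⟨h1, h2, _⟩
          exact Set.mem_singleton_iff.mpr (le_antisymm h2 h1)
        exact measure_mono_null hsub Real.volume_singleton
      rw [h0]; simp
    | succ n ih =>
      rw [Finset.sum_range_succ, ← ih]
      have hcast : ((n + 1 : ℕ) : ℝ) = (n : ℝ) + 1 := by push_cast; ring
      have hsp := hsplit x n 1 (Nat.cast_nonneg n) zero_le_one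
      have hsh := hshift (n : ℝ) (Nat.cast_nonneg n) x 1
      have hTn : T (n:ℝ) x = S^[n] x := (hTnat n x).symm
      rw [hTn] at hsh
      simp only [hWdef]
      rw [hcast, hsp, ← hsh]
      rw [ENNReal.toReal_add (hvol_fin x n) (hvol_fin _ 1)]
  -- the liminf function
  set ψ : X → ℝ := fun x => liminf (fun n : ℕ => W x (n : ℝ) / n) atTop with hψdef
  have hψ0 : ∀ x, 0 ≤ ψ x := by
    intro x
    exact my_le_liminf (fun n => hr1 x n) (Eventually.of_forall (fun n => hr0 x n))
  have hψ1 : ∀ x, ψ x ≤ 1 := by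
    intro x
    exact my_liminf_le (fun n => hr0 x n) (Frequently.of_forall (fun n => hr1 x n))
  -- measurability
  have hWm : ∀ N : ℝ, Measurable (fun x => volume (St x N)) := by
    intro N
    have hs : MeasurableSet {p : X × ℝ | 0 ≤ p.2 ∧ p.2 ≤ N ∧ T p.2 p.1 ∈ V} := by
      have h1 : Measurable (fun p : X × ℝ => T p.2 p.1) :=
        hTjoint.comp (measurable_snd.prodMk measurable_fst)
      refine MeasurableSet.inter (measurable_snd measurableSet_Ici) ?_
      exact MeasurableSet.inter (measurable_snd measurableSet_Iic) (h1 hV)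
    have := measurable_measure_prodMk_left (ν := volume) hs
    exact this
  have hWmr : ∀ N : ℝ, Measurable (fun x => W x N) :=
    fun N => (ENNReal.measurable_toReal).comp (hWm N)
  have hψm : Measurable ψ := by
    refine Measurable.liminf (fun n => ?_)
    exact (hWmr (n:ℝ)).div_const _
  -- ψ is invariant under the flow
  have hWshift : ∀ (s : ℝ), 0 ≤ s → ∀ x (N : ℝ), 0 ≤ N →
      W x N - s ≤ W (T s x) N ∧ W (T s x) N ≤ W x N + s := by
    intro s hs x N hN
    have h1 := hshift s hs x N
    -- upper bound
    have hsub1 : {t : ℝ | s ≤ t ∧ t ≤ s + N ∧ T t x ∈ V} ⊆ St x (s + N) := by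
      rintro t ⟨ha, hb, hc⟩
      exact ⟨hs.trans ha, hb, hc⟩
    have hup : volume (St (T s x) N) ≤ volume (St x N) + ENNReal.ofReal s := by
      rw [h1]
      refine le_trans (measure_mono hsub1) ?_
      rw [add_comm s N, hsplit x N s hN hs]
      refine add_le_add le_rfl ?_
      refine le_trans (measure_mono (fun t ht => Set.mem_Icc.mpr ⟨ht.1, ht.2.1⟩)) ?_
      rw [Real.volume_Icc]
      simp
    -- lower bound
    have hdown : volume (St x N) ≤ volume (St (T s x) N) + ENNReal.ofReal s := by
      rw [h1]
      have hsub2 : St x N ⊆ {t : ℝ | s ≤ t ∧ t ≤ s + N ∧ T t x ∈ V} ∪ Set.Icc 0 s := by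
        rintro t ⟨ha, hb, hc⟩
        rcases le_or_gt t s with h | h
        · exact Or.inr (Set.mem_Icc.mpr ⟨ha, h⟩)
        · exact Or.inl ⟨h.le, by linarith, hc⟩
      refine le_trans (measure_mono hsub2) ?_
      refine le_trans (measure_union_le _ _) ?_
      rw [Real.volume_Icc, sub_zero]
    constructor
    · have := ENNReal.toReal_mono
        (by exact ENNReal.add_ne_top.mpr ⟨hvol_fin _ N, ENNReal.ofReal_ne_top⟩) hdown
      rw [ENNReal.toReal_add (hvol_fin _ N) ENNReal.ofReal_ne_top,
        ENNReal.toReal_ofReal hs] at this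
      simp only [hWdef]
      linarith
    · have := ENNReal.toReal_mono
        (by exact ENNReal.add_ne_top.mpr ⟨hvol_fin _ N, ENNReal.ofReal_ne_top⟩) hup
      rw [ENNReal.toReal_add (hvol_fin _ N) ENNReal.ofReal_ne_top,
        ENNReal.toReal_ofReal hs] at this
      simp only [hWdef]
      linarith
  have hψinv : ∀ (s : ℝ), 0 ≤ s → ∀ x, ψ (T s x) = ψ x := by
    intro s hs x
    have key : ∀ ε : ℝ, 0 < ε → ∀ᶠ n : ℕ in atTop,
        (W (T s x) (n:ℝ) / n ≤ W x (n:ℝ) / n + ε ∧ W x (n:ℝ) / n ≤ W (T s x) (n:ℝ) / n + ε) := by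
      intro ε hε
      obtain ⟨m, hm⟩ := exists_nat_gt (s / ε)
      filter_upwards [eventually_ge_atTop (m+1)] with n hn
      have hn1 : 1 ≤ n := le_trans (Nat.le_add_left 1 m) hn
      have hnpos : (0:ℝ) < n := by exact_mod_cast hn1
      have hmn : s / ε < (n:ℝ) := lt_of_lt_of_le hm (by exact_mod_cast Nat.le_of_succ_le hn)
      have hsn : s / n ≤ ε := by
        rw [div_le_iff₀ hnpos]
        rw [div_lt_iff₀ hε] at hmn
        nlinarith
      obtain ⟨hlo, hhi⟩ := hWshift s hs x (n:ℝ) (Nat.cast_nonneg n)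
      constructor
      · have h5 : W (T s x) (n:ℝ) / n ≤ (W x (n:ℝ) + s) / n :=
          (div_le_div_iff_of_pos_right hnpos).mpr hhi
        rw [add_div] at h5
        have h6 : s / n ≤ ε := hsn
        linarith
      · have h5 : W x (n:ℝ) / n ≤ (W (T s x) (n:ℝ) + s) / n :=
          (div_le_div_iff_of_pos_right hnpos).mpr (by linarith)
        rw [add_div] at h5
        linarith [hsn]
    refine le_antisymm ?_ ?_
    · exact my_liminf_le_liminf (fun n => hr0 _ _) (fun n => hr1 _ _)
        (fun ε hε => (key ε hε).mono (fun n hn => hn.1))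
    · exact my_liminf_le_liminf (fun n => hr0 _ _) (fun n => hr1 _ _)
        (fun ε hε => (key ε hε).mono (fun n hn => hn.2))
  have hψS : ∀ x, ψ (S x) = ψ x := fun x => hψinv 1 zero_le_one x
  -- frequently hypothesis
  have hfreq : ∀ x, ∀ ε : ℝ, 0 < ε → ∀ m : ℕ, ∃ n, m ≤ n ∧ 1 ≤ n ∧
      ∑ k ∈ Finset.range n, F (S^[k] x) ≤ n * (ψ x + ε) := by
    intro x ε hε m
    by_contra hc
    push_neg at hc
    have hev : ∀ᶠ n : ℕ in atTop, ψ x + ε ≤ W x (n:ℝ) / n := by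
      filter_upwards [eventually_ge_atTop (max m 1)] with n hn
      have hm : m ≤ n := le_trans (le_max_left _ _) hn
      have h1 : 1 ≤ n := le_trans (le_max_right _ _) hn
      have hnpos : (0:ℝ) < n := by exact_mod_cast h1
      have := hc n hm h1
      rw [← hblock] at this
      rw [le_div_iff₀ hnpos]
      linarith
    have := my_le_liminf (u := fun n : ℕ => W x (n:ℝ) / n) (fun n => hr1 x (n:ℝ)) hev
    have hcontra : ψ x + ε ≤ ψ x := this
    linarith
  -- the measure is preserved by S
  have hSmap : Measure.map S μ = μ := by
    refine Measure.ext (fun A hA => ?_)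
    rw [Measure.map_apply hSm hA]
    exact hinv 1 zero_le_one A hA
  -- ∫ F dμ = (μ V).toReal
  have hintF : ∫ x, F x ∂μ = (μ V).toReal := by
    have hs : MeasurableSet {p : X × ℝ | 0 ≤ p.2 ∧ p.2 ≤ 1 ∧ T p.2 p.1 ∈ V} := by
      have h1 : Measurable (fun p : X × ℝ => T p.2 p.1) :=
        hTjoint.comp (measurable_snd.prodMk measurable_fst)
      refine MeasurableSet.inter (measurable_snd measurableSet_Ici) ?_
      exact MeasurableSet.inter (measurable_snd measurableSet_Iic) (h1 hV)
    have h1 : (μ.prod volume) {p : X × ℝ | 0 ≤ p.2 ∧ p.2 ≤ 1 ∧ T p.2 p.1 ∈ V}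
        = ∫⁻ x, volume (St x 1) ∂μ := by
      rw [Measure.prod_apply hs]
      rfl
    have h2 : (μ.prod volume) {p : X × ℝ | 0 ≤ p.2 ∧ p.2 ≤ 1 ∧ T p.2 p.1 ∈ V} = μ V := by
      rw [Measure.prod_apply_symm hs]
      have heq : (fun t : ℝ => μ ((fun x => (x, t)) ⁻¹' {p : X × ℝ | 0 ≤ p.2 ∧ p.2 ≤ 1 ∧ T p.2 p.1 ∈ V}))
          = fun t : ℝ => Set.indicator (Set.Icc (0:ℝ) 1) (fun _ => μ V) t := by
        funext t
        rcases Classical.em (t ∈ Set.Icc (0:ℝ) 1) with ht | ht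
        · rw [Set.indicator_of_mem ht]
          obtain ⟨ht0, ht1⟩ := Set.mem_Icc.mp ht
          have hpre : ((fun x => (x, t)) ⁻¹' {p : X × ℝ | 0 ≤ p.2 ∧ p.2 ≤ 1 ∧ T p.2 p.1 ∈ V})
              = T t ⁻¹' V := by
            ext y
            simp [ht0, ht1]
          rw [hpre]
          exact hinv t ht0 V hV
        · rw [Set.indicator_of_notMem ht]
          have hpre : ((fun x => (x, t)) ⁻¹' {p : X × ℝ | 0 ≤ p.2 ∧ p.2 ≤ 1 ∧ T p.2 p.1 ∈ V})
              = ∅ := by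
            ext y
            simp only [Set.mem_preimage, Set.mem_setOf_eq, Set.mem_empty_iff_false, iff_false]
            rintro ⟨h1', h2', _⟩
            exact ht (Set.mem_Icc.mpr ⟨h1', h2'⟩)
          rw [hpre]
          simp
      rw [heq, lintegral_indicator measurableSet_Icc _]
      rw [setLIntegral_const, Real.volume_Icc]
      simp
    have h3 : ∫⁻ x, volume (St x 1) ∂μ = μ V := by rw [← h1, h2]
    have h4 : ∫ x, F x ∂μ = (∫⁻ x, volume (St x 1) ∂μ).toReal := by
      refine integral_toReal ((hWm 1).aemeasurable) ?_
      filter_upwards with x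
      exact (hvol_le x 1).trans_lt ENNReal.ofReal_lt_top
    rw [h4, h3]
  -- apply the Katznelson–Weiss inequality
  have hFm : Measurable F := hWmr 1
  have hkw : ∫ x, F x ∂μ ≤ ∫ x, ψ x ∂μ :=
    my_kw μ S hSm hSmap F hFm hF0 hF1 ψ hψm hψ0 hψ1 hψS (by
      intro x ε hε m
      obtain ⟨n, h1, h2, h3⟩ := hfreq x ε hε m
      exact ⟨n, h1, h2, h3⟩)
  -- ergodic step : ψ ≥ (μ V).toReal a.e.
  set c : ℝ := (μ V).toReal with hcdef
  have hae : ∀ᵐ x ∂μ, c ≤ ψ x := by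
    set A : Set X := {x | c ≤ ψ x} with hAdef
    have hAm : MeasurableSet A := measurableSet_le measurable_const hψm
    have hAinv : ∀ t : ℝ, 0 ≤ t → T t ⁻¹' A = A := by
      intro t ht
      ext x
      simp only [Set.mem_preimage, hAdef, Set.mem_setOf_eq]
      rw [hψinv t ht x]
    rcases hergodic A hAm hAinv with h0 | h1
    · exfalso
      have hψi : Integrable ψ μ := my_integrable hψm hψ0 hψ1
      have hpos : 0 < ∫ x, (c - ψ x) ∂μ := by
        refine (integral_pos_iff_support_of_nonneg_ae ?_ ?_).mpr ?_
        · have hcompl : μ Aᶜ = 1 := by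
            rw [measure_compl hAm (measure_ne_top μ A), h0, measure_univ]
            simp
          rw [Filter.EventuallyLE]
          have : ∀ᵐ x ∂μ, x ∈ Aᶜ := by
            rw [MeasureTheory.ae_iff]
            simp only [Set.mem_compl_iff, not_not]
            exact h0
          filter_upwards [this] with x hx
          have : ψ x < c := not_le.mp hx
          simp only [Pi.zero_apply]
          linarith
        · exact (integrable_const c).sub hψi
        · have hcompl : μ Aᶜ = 1 := by
            rw [measure_compl hAm (measure_ne_top μ A), h0, measure_univ]
            simp
          have hsub : Aᶜ ⊆ Function.support (fun x => c - ψ x) := by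
            intro x hx
            have hlt : ψ x < c := not_le.mp hx
            simp only [Function.mem_support]
            intro hzero
            rw [sub_eq_zero] at hzero
            exact absurd hzero.symm (ne_of_lt hlt)
          refine lt_of_lt_of_le ?_ (measure_mono hsub)
          rw [hcompl]; norm_num
      have hint : ∫ x, (c - ψ x) ∂μ = c - ∫ x, ψ x ∂μ := by
        rw [integral_sub (integrable_const c) hψi, integral_const]
        simp [measure_univ]
      rw [hint] at hpos
      rw [hintF] at hkw
      linarith
    · have hh : μ A = μ Set.univ := by rw [h1, measure_univ]
      exact (ae_iff_measure_eq hAm.nullMeasurableSet).mpr hh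
  -- link with the real liminf
  refine hae.mono (fun x hx => ?_)
  show c ≤ liminf (fun N : ℝ => W x N / N) atTop
  have main : ∀ ε : ℝ, 0 < ε → c - 2*ε ≤ liminf (fun N : ℝ => W x N / N) atTop := by
    intro ε hε
    have hev : ∀ᶠ n : ℕ in atTop, ψ x - ε ≤ W x (n:ℝ) / n := by
      by_contra hcon
      rw [Filter.not_eventually] at hcon
      have h2 : ψ x ≤ ψ x - ε :=
        my_liminf_le (fun n : ℕ => hr0 x (n:ℝ)) (hcon.mono (fun n hn => (not_le.mp hn).le))
      linarith
    rw [eventually_atTop] at hev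
    obtain ⟨n₀, hn₀⟩ := hev
    obtain ⟨m, hm⟩ := exists_nat_gt (1/ε)
    set K : ℕ := max n₀ m + 1 with hKdef
    have hev2 : ∀ᶠ N : ℝ in atTop, c - 2*ε ≤ W x N / N := by
      filter_upwards [eventually_ge_atTop ((K:ℝ) + 1)] with N hN
      have hK1 : (1:ℝ) ≤ K := by
        have : 1 ≤ K := Nat.le_add_left 1 _
        exact_mod_cast this
      have hN0 : (0:ℝ) ≤ N := by linarith
      set n : ℕ := Nat.floor N with hn
      have hKn : K ≤ n := Nat.le_floor (by linarith)
      have hn1 : 1 ≤ n := le_trans (by omega) hKn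
      have hnpos : (0:ℝ) < n := by exact_mod_cast hn1
      have hNpos : (0:ℝ) < N := by linarith
      have h1 : (n:ℝ) ≤ N := Nat.floor_le hN0
      have h2 : N < (n:ℝ) + 1 := Nat.lt_floor_add_one N
      have hn₀n : n₀ ≤ n := le_trans (by omega) hKn
      have hmn : m ≤ n := le_trans (by omega) hKn
      have hun : ψ x - ε ≤ W x (n:ℝ) / n := hn₀ n hn₀n
      have ha0 : 0 ≤ W x (n:ℝ) := hW0 x n
      have han : W x (n:ℝ) ≤ n := by
        have := hr1 x (n:ℝ)
        rw [div_le_one hnpos] at this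
        exact this
      have hWN : W x (n:ℝ) ≤ W x N := hWmono x n N h1
      have hstep1 : W x (n:ℝ) / N ≤ W x N / N := (div_le_div_iff_of_pos_right hNpos).mpr hWN
      have hstep2 : W x (n:ℝ) / ((n:ℝ)+1) ≤ W x (n:ℝ) / N :=
        div_le_div_of_nonneg_left ha0 hNpos (by linarith) |>.trans_eq rfl
      have hstep3 : W x (n:ℝ) / n - 1/((n:ℝ)+1) ≤ W x (n:ℝ) / ((n:ℝ)+1) := by
        have heq : W x (n:ℝ) / n - W x (n:ℝ) / ((n:ℝ)+1)
            = W x (n:ℝ) / ((n:ℝ) * ((n:ℝ)+1)) := by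
          field_simp
          ring
        have hle : W x (n:ℝ) / ((n:ℝ) * ((n:ℝ)+1)) ≤ 1/((n:ℝ)+1) := by
          rw [div_le_div_iff₀ (by positivity) (by positivity)]
          nlinarith
        linarith
      have hsmall : 1/((n:ℝ)+1) ≤ ε := by
        have hmε : 1/ε < (m:ℝ) := hm
        have hmn' : (m:ℝ) ≤ n := by exact_mod_cast hmn
        rw [div_le_iff₀ (by positivity)]
        rw [div_lt_iff₀ hε] at hmε
        nlinarith
      have hcψ : c ≤ ψ x := hx
      linarith
    exact my_le_liminf (fun N => hr1 x N) hev2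
  by_contra hcon
  push_neg at hcon
  have := main ((c - liminf (fun N : ℝ => W x N / N) atTop)/4) (by linarith)
  linarith

set_option maxHeartbeats 1000000 in
theorem ergodic_measure_implies_frequent_hypercyclicity
    {X : Type*} [NormedAddCommGroup X] [NormedSpace ℝ X] [CompleteSpace X]
    [TopologicalSpace.SeparableSpace X] [MeasurableSpace X] [BorelSpace X]
    (T : ℝ → X →L[ℝ] X)
    (hT0 : T 0 = ContinuousLinearMap.id ℝ X)
    (hTadd : ∀ s t : ℝ, 0 ≤ s → 0 ≤ t → T (s + t) = (T s).comp (T t))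
    (hTcont : ∀ x : X, ContinuousOn (fun t : ℝ => T t x) (Set.Ici 0))
    (hTjoint : Measurable (fun p : ℝ × X => T p.1 p.2))
    (μ : Measure X) [IsProbabilityMeasure μ]
    (hinv : ∀ t : ℝ, 0 ≤ t → ∀ A : Set X, MeasurableSet A → μ (T t ⁻¹' A) = μ A)
    (hergodic : ∀ A : Set X, MeasurableSet A →
      (∀ t : ℝ, 0 ≤ t → T t ⁻¹' A = A) → μ A = 0 ∨ μ A = 1)
    (hfull : ∀ U : Set X, IsOpen U → U.Nonempty → 0 < μ U) :
    (∀ᵐ x ∂μ, ∀ U : Set X, IsOpen U → U.Nonempty →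
      (μ U).toReal ≤ liminf (fun N : ℝ =>
        (volume {t : ℝ | 0 ≤ t ∧ t ≤ N ∧ T t x ∈ U}).toReal / N) atTop) ∧
    (∃ x : X, ∀ U : Set X, IsOpen U → U.Nonempty →
      0 < liminf (fun N : ℝ =>
        (volume {t : ℝ | 0 ≤ t ∧ t ≤ N ∧ T t x ∈ U}).toReal / N) atTop) := by
  haveI : SecondCountableTopology X := UniformSpace.secondCountable_of_separable X
  obtain ⟨B, hBc, hBne, hBbasis⟩ := TopologicalSpace.exists_countable_basis X
  set D : Set (Set X) := Set.sUnion '' {s : Set (Set X) | s.Finite ∧ s ⊆ B} with hDdef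
  have hDc : D.Countable := (Set.countable_setOf_finite_subset hBc).image _
  have hDopen : ∀ V ∈ D, IsOpen V := by
    rintro V ⟨s, ⟨hsf, hsB⟩, rfl⟩
    exact isOpen_sUnion (fun b hb => hBbasis.isOpen (hsB hb))
  have hmain : ∀ᵐ x ∂μ, ∀ V, V ∈ D → (μ V).toReal ≤ liminf (fun N : ℝ =>
      (volume {t : ℝ | 0 ≤ t ∧ t ≤ N ∧ T t x ∈ V}).toReal / N) atTop := by
    rw [ae_ball_iff hDc]
    intro V hVD
    exact my_core T hT0 hTadd hTjoint μ hinv hergodic V (hDopen V hVD).measurableSet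
  have hpart1 : ∀ᵐ x ∂μ, ∀ U : Set X, IsOpen U → U.Nonempty →
      (μ U).toReal ≤ liminf (fun N : ℝ =>
        (volume {t : ℝ | 0 ≤ t ∧ t ≤ N ∧ T t x ∈ U}).toReal / N) atTop := by
    refine hmain.mono (fun x hx U hU hUne => ?_)
    -- ratio facts at this x
    have hvle : ∀ (Y : Set X) (N : ℝ),
        volume {t : ℝ | 0 ≤ t ∧ t ≤ N ∧ T t x ∈ Y} ≤ ENNReal.ofReal N := by
      intro Y N
      have h1 : {t : ℝ | 0 ≤ t ∧ t ≤ N ∧ T t x ∈ Y} ⊆ Set.Icc 0 N :=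
        fun t ht => Set.mem_Icc.mpr ⟨ht.1, ht.2.1⟩
      calc volume {t : ℝ | 0 ≤ t ∧ t ≤ N ∧ T t x ∈ Y} ≤ volume (Set.Icc 0 N) :=
            measure_mono h1
        _ = ENNReal.ofReal N := by rw [Real.volume_Icc, sub_zero]
    have hmono : ∀ (V' : Set X), V' ⊆ U →
        liminf (fun N : ℝ => (volume {t : ℝ | 0 ≤ t ∧ t ≤ N ∧ T t x ∈ V'}).toReal / N) atTop
          ≤ liminf (fun N : ℝ => (volume {t : ℝ | 0 ≤ t ∧ t ≤ N ∧ T t x ∈ U}).toReal / N) atTop := by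
      intro V' hVU
      refine my_liminf_le_liminf (fun N => (my_ratio (hvle V' N)).1)
        (fun N => (my_ratio (hvle U N)).2) (fun ε hε => Eventually.of_forall (fun N => ?_))
      have hptle : (volume {t : ℝ | 0 ≤ t ∧ t ≤ N ∧ T t x ∈ V'}).toReal
          ≤ (volume {t : ℝ | 0 ≤ t ∧ t ≤ N ∧ T t x ∈ U}).toReal := by
        refine ENNReal.toReal_mono ((hvle U N).trans_lt ENNReal.ofReal_lt_top).ne
          (measure_mono (fun t ht => ⟨ht.1, ht.2.1, hVU ht.2.2⟩))
      rcases le_or_gt N 0 with hN | hN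
      · have hz : ∀ (Y : Set X), (volume {t : ℝ | 0 ≤ t ∧ t ≤ N ∧ T t x ∈ Y}).toReal = 0 := by
          intro Y
          have := (hvle Y N).trans (le_of_eq (ENNReal.ofReal_eq_zero.mpr hN))
          simp [le_antisymm this zero_le]
        rw [hz V', hz U]
        simp; linarith
      · have := (div_le_div_iff_of_pos_right hN).mpr hptle
        linarith
    refine le_of_forall_pos_le_add (fun ε hε => ?_)
    -- approximate U from inside by an element of D
    set S0 : Set (Set X) := {b | b ∈ B ∧ b ⊆ U} with hS0def
    have hUeq : U = ⋃₀ S0 := hBbasis.open_eq_sUnion' hU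
    have hS0ne : S0.Nonempty := by
      rcases Set.eq_empty_or_nonempty S0 with h | h
      · rw [h] at hUeq
        simp at hUeq
        exact absurd hUeq (Set.nonempty_iff_ne_empty.mp hUne)
      · exact h
    have hS0c : S0.Countable := hBc.mono (fun b hb => hb.1)
    obtain ⟨f, hf⟩ := hS0c.exists_eq_range hS0ne
    have hUeq2 : U = ⋃ n, f n := by rw [hUeq, hf, Set.sUnion_range]
    have htd := tendsto_measure_iUnion_accumulate (μ := μ) (f := f)
    rw [← hUeq2] at htd
    have htd2 : Tendsto (fun n => (μ (Set.accumulate f n)).toReal) atTop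
        (nhds (μ U).toReal) :=
      (ENNReal.tendsto_toReal (measure_ne_top μ U)).comp htd
    have hev : ∀ᶠ n in atTop, (μ U).toReal - ε < (μ (Set.accumulate f n)).toReal :=
      htd2.eventually (eventually_gt_nhds (by linarith))
    obtain ⟨n, hn⟩ := hev.exists
    have hVD : Set.accumulate f n ∈ D := by
      refine ⟨f '' Set.Iic n, ⟨(Set.finite_Iic n).image f, ?_⟩, ?_⟩
      · rintro b ⟨i, hi, rfl⟩
        have : f i ∈ S0 := by rw [hf]; exact Set.mem_range_self i
        exact this.1
      · rw [Set.sUnion_image, Set.accumulate_def]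
        ext y
        simp [Set.mem_Iic]
    have hVU : Set.accumulate f n ⊆ U := by
      rw [hUeq2]
      intro y hy
      rw [Set.accumulate_def] at hy
      obtain ⟨i, _, hyi⟩ := Set.mem_iUnion₂.mp hy
      exact Set.mem_iUnion.mpr ⟨i, hyi⟩
    have h1 := hx (Set.accumulate f n) hVD
    have h2 := hmono (Set.accumulate f n) hVU
    linarith
  refine ⟨hpart1, ?_⟩
  haveI : (ae μ).NeBot := ae_neBot.mpr (IsProbabilityMeasure.ne_zero μ)
  obtain ⟨x, hx⟩ := hpart1.exists
  refine ⟨x, fun U hU hUne => lt_of_lt_of_le ?_ (hx U hU hUne)⟩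
  exact ENNReal.toReal_pos (hfull U hU hUne).ne' (measure_ne_top μ U)
end
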